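/- Let n ≥ 2, N = 2^n, and let u : Fin N → ℂ satisfy ‖u j‖ = 1 for all j. Then there exist Φ ∈ ℝ, an angle α_0 ∈ ℝ, angles α_S ∈ ℝ for every nonempty subset S ⊆ {1, …, n−1}, and v : Fin 2^(n−1) → ℂ with ‖v k‖ = 1 for all k, such that for every j ∈ Fin N (with last bit b_n = j mod 2): u(j) = exp(i·Φ) · (∏_{S nonempty ⊆ {1,…,n−1}} d_S(α_S)(j)) · exp(i·α_0·(−1)^(1 + b_n)/ 2) · v(⌊j/2⌋). Equivalently, Matrix.diagonal u equals exp(i·Φ) times the product of the commuting diagonal matrices ⊕_S[R_z(α_S)] over all nonempty S, times I_{2^(n−1)} ⊗ R_z(α_0), times (Matrix.diagonal v) ⊗ I_2. -/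

import Mathlib

/-- For `n ≥ 1` and `j < 2^n`, the quotient `j / 2` is a valid `(n-1)`-qubit index. -/
lemma div2_lt {n : ℕ} (hn : 1 ≤ n) (j : Fin (2^n)) : (j : ℕ) / 2 < 2^(n-1) := by
  have h : (2:ℕ)^n = 2^(n-1) * 2 := by
    conv_lhs => rw [show n = (n-1) + 1 by omega]
    rw [pow_succ]
  have hj := j.isLt
  omega

/-- Parity `⊕_{k ∈ S} b_k(m)` of the bits of `m` selected by `S`, where there are
`nLines` lines and line `k` holds bit position `nLines - k` (line 1 most significant). -/
def lineParity (nLines : ℕ) (S : Finset ℕ) (m : ℕ) : Bool :=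
  (S.filter fun k => Nat.testBit m (nLines - k) = true).card % 2 == 1

/-- Diagonal entries of the XOR-controlled rotation `⊕_S[R_z(α)]` on `n` qubits:
`exp(-i·α/2)` if `b_n ⊕ (⊕_{k∈S} b_k) = 0` and `exp(i·α/2)` otherwise. -/
noncomputable def dS (n : ℕ) (S : Finset ℕ) (α : ℝ) (m : Fin (2^n)) : ℂ :=
  if Nat.testBit (m : ℕ) 0 = lineParity n S (m : ℕ)
  then Complex.exp (-(Complex.I * (α : ℂ) / 2))
  else Complex.exp (Complex.I * (α : ℂ) / 2)

/-- Sign character: `∏_{i∈S} (-1)^{bit (n-1-i) of k}`. -/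
noncomputable def sgn (n : ℕ) (S : Finset ℕ) (k : ℕ) : ℝ :=
  ∏ i ∈ S, (if Nat.testBit k (n-1-i) then (-1:ℝ) else 1)

lemma prod_ite_neg_one (S : Finset ℕ) (q : ℕ → Prop) [DecidablePred q] :
    ∏ i ∈ S, (if q i then (-1:ℝ) else 1) = (-1:ℝ)^((S.filter q).card) := by
  rw [Finset.prod_ite, Finset.prod_const, Finset.prod_const, one_pow, mul_one]

lemma lineParity_sgn {n : ℕ} (hn : 2 ≤ n) {S : Finset ℕ}
    (hS : S ⊆ Finset.Icc 1 (n-1)) (k b : ℕ) (hb : b < 2) :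
    (if lineParity n S (2*k+b) then (-1:ℝ) else 1) = sgn n S k := by
  have hfil : S.filter (fun i => Nat.testBit (2*k+b) (n-i) = true)
      = S.filter (fun i => Nat.testBit k (n-1-i) = true) := by
    apply Finset.filter_congr
    intro i hi
    have hi' := Finset.mem_Icc.mp (hS hi)
    have h1 : n - i = (n - 1 - i) + 1 := by omega
    have h2 : (2*k+b)/2 = k := by omega
    rw [h1, Nat.testBit_add_one, h2]
  have hsgn : sgn n S k = (-1:ℝ)^((S.filter fun i => Nat.testBit k (n-1-i) = true).card) := by
    exact prod_ite_neg_one _ _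
  unfold lineParity
  rw [hfil, hsgn]
  rcases Nat.even_or_odd ((S.filter fun i => Nat.testBit k (n-1-i) = true).card) with h | h
  · rw [Even.neg_one_pow h]
    obtain ⟨c, hc⟩ := h
    simp [hc, show c + c = 2 * c by ring, Nat.mul_mod_right]
  · rw [Odd.neg_one_pow h]
    obtain ⟨c, hc⟩ := h
    have h2 : (2*c+1) % 2 = 1 := by omega
    simp [hc, h2]

lemma dS_eq {n : ℕ} (hn : 2 ≤ n) {S : Finset ℕ} (hS : S ⊆ Finset.Icc 1 (n-1))
    (α : ℝ) (k b : ℕ) (hb : b < 2) (j : Fin (2^n)) (hj : (j:ℕ) = 2*k+b) :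
    dS n S α j = Complex.exp (Complex.I * (α:ℂ) * (-1:ℂ)^(1+b) * ((sgn n S k : ℝ) : ℂ) / 2) := by
  have hls := lineParity_sgn hn hS k b hb
  unfold dS
  rw [hj]
  have ht0 : Nat.testBit (2*k+0) 0 = false := by simp [Nat.testBit_zero]
  have ht1 : Nat.testBit (2*k+1) 0 = true := by simp [Nat.testBit_zero]
  rcases Bool.eq_false_or_eq_true (lineParity n S (2*k+b)) with hp | hp <;>
    rw [hp] at hls ⊢ <;> simp only [if_true, if_false, Bool.false_eq_true] at hls <;>
    interval_cases b
  · rw [ht0]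
    simp only [if_pos rfl, ← hls]
    push_cast
    congr 1
    ring
  · rw [ht1]
    simp only [Bool.true_eq_false, if_neg (by simp : ¬ (true = false)), ← hls]
    push_cast
    congr 1
    ring
  · rw [ht0]
    simp only [Bool.false_eq_true, if_neg (by simp : ¬ (false = true)), ← hls]
    push_cast
    congr 1
    ring
  · rw [ht1]
    simp only [if_pos rfl, ← hls]
    push_cast
    congr 1
    ring

lemma sgn_orthogonal {n : ℕ} (hn : 2 ≤ n) {k k' : ℕ} (hk : k < 2^(n-1)) (hk' : k' < 2^(n-1)) :
    ∑ S ∈ (Finset.Icc 1 (n-1)).powerset, sgn n S k * sgn n S k'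
      = if k = k' then (2:ℝ)^(n-1) else 0 := by
  set e : ℕ → ℝ := fun i =>
    (if Nat.testBit k (n-1-i) then (-1:ℝ) else 1) *
    (if Nat.testBit k' (n-1-i) then (-1:ℝ) else 1) with he
  have h1 : ∀ S : Finset ℕ, sgn n S k * sgn n S k' = ∏ i ∈ S, e i := by
    intro S; rw [sgn, sgn, ← Finset.prod_mul_distrib]
  have h2 : ∏ i ∈ Finset.Icc 1 (n-1), (e i + 1)
      = ∑ S ∈ (Finset.Icc 1 (n-1)).powerset, ∏ i ∈ S, e i := by
    rw [Finset.prod_add]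
    exact Finset.sum_congr rfl (fun t ht => by simp)
  simp only [h1]
  rw [← h2]
  by_cases hkk : k = k'
  · subst hkk
    rw [if_pos rfl]
    have : ∀ i ∈ Finset.Icc 1 (n-1), e i + 1 = 2 := by
      intro i _
      by_cases hb : Nat.testBit k (n-1-i) <;> simp [he, hb] <;> norm_num
    rw [Finset.prod_congr rfl this, Finset.prod_const, Nat.card_Icc]
    norm_num
  · rw [if_neg hkk]
    have hex : ∃ p, Nat.testBit k p ≠ Nat.testBit k' p := by
      by_contra h
      push_neg at h
      exact hkk (Nat.eq_of_testBit_eq h)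
    obtain ⟨p, hp⟩ := hex
    have hplt : p < n - 1 := by
      by_contra h
      push_neg at h
      have e1 : Nat.testBit k p = false :=
        Nat.testBit_lt_two_pow (lt_of_lt_of_le hk (Nat.pow_le_pow_right (by norm_num) h))
      have e2 : Nat.testBit k' p = false :=
        Nat.testBit_lt_two_pow (lt_of_lt_of_le hk' (Nat.pow_le_pow_right (by norm_num) h))
      exact hp (e1.trans e2.symm)
    have hmem : n - 1 - p ∈ Finset.Icc 1 (n-1) := by
      rw [Finset.mem_Icc]; omega
    apply Finset.prod_eq_zero hmem
    have hpp : n - 1 - (n - 1 - p) = p := by omega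
    rcases Bool.eq_false_or_eq_true (Nat.testBit k p) with hb | hb <;>
      rcases Bool.eq_false_or_eq_true (Nat.testBit k' p) with hb' | hb' <;>
      simp [he, hpp, hb, hb'] at hp ⊢

lemma walsh_inv {n : ℕ} (hn : 2 ≤ n) (φ : Fin (2^(n-1)) → ℝ) (k : Fin (2^(n-1))) :
    ∑ S ∈ (Finset.Icc 1 (n-1)).powerset,
      ((∑ k' : Fin (2^(n-1)), φ k' * sgn n S (k' : ℕ)) / 2^(n-1)) * sgn n S (k : ℕ)
      = φ k := by
  have step : ∀ S ∈ (Finset.Icc 1 (n-1)).powerset,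
      ((∑ k' : Fin (2^(n-1)), φ k' * sgn n S (k' : ℕ)) / 2^(n-1)) * sgn n S (k : ℕ)
      = ∑ k' : Fin (2^(n-1)), φ k' * (sgn n S (k' : ℕ) * sgn n S (k : ℕ)) / 2^(n-1) := by
    intro S _
    rw [div_mul_eq_mul_div, Finset.sum_mul, Finset.sum_div]
    exact Finset.sum_congr rfl (fun k' _ => by ring)
  rw [Finset.sum_congr rfl step, Finset.sum_comm]
  have inner : ∀ k' : Fin (2^(n-1)),
      ∑ S ∈ (Finset.Icc 1 (n-1)).powerset,
        φ k' * (sgn n S (k' : ℕ) * sgn n S (k : ℕ)) / 2^(n-1)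
      = if (k' : ℕ) = (k : ℕ) then φ k' else 0 := by
    intro k'
    have : ∑ S ∈ (Finset.Icc 1 (n-1)).powerset,
        φ k' * (sgn n S (k' : ℕ) * sgn n S (k : ℕ)) / 2^(n-1)
        = φ k' * (∑ S ∈ (Finset.Icc 1 (n-1)).powerset,
            sgn n S (k' : ℕ) * sgn n S (k : ℕ)) / 2^(n-1) := by
      rw [Finset.mul_sum, Finset.sum_div]
    rw [this, sgn_orthogonal hn k'.isLt k.isLt]
    by_cases h : (k' : ℕ) = (k : ℕ) <;> simp [h]
  rw [Finset.sum_congr rfl (fun k' _ => inner k')]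
  simp [Fin.val_inj]

/-- Canonical index in `Fin (2^n)` from a natural number (mod `2^n`). -/
def idx (n : ℕ) (m : ℕ) : Fin (2^n) := ⟨m % 2^n, Nat.mod_lt _ (Nat.two_pow_pos n)⟩

/-- Phase difference between odd and even entries. -/
noncomputable def phiU (n : ℕ) (u : Fin (2^n) → ℂ) (k : Fin (2^(n-1))) : ℝ :=
  (u (idx n (2*(k:ℕ)+1))).arg - (u (idx n (2*(k:ℕ)))).arg

/-- Walsh coefficients. -/
noncomputable def alphaU (n : ℕ) (u : Fin (2^n) → ℂ) (S : Finset ℕ) : ℝ :=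
  (∑ k' : Fin (2^(n-1)), phiU n u k' * sgn n S (k' : ℕ)) / 2^(n-1)

/-- Remaining diagonal on the first `n-1` lines. -/
noncomputable def vU (n : ℕ) (u : Fin (2^n) → ℂ) (k : Fin (2^(n-1))) : ℂ :=
  Complex.exp ((((u (idx n (2*(k:ℕ)))).arg + (u (idx n (2*(k:ℕ)+1))).arg)/2 : ℝ) * Complex.I)

/-- every diagonal unitary `u` on `n ≥ 2` qubits decomposes as a global phase
times the product of XOR-controlled rotations `⊕_S[R_z(α_S)]` over all nonempty
`S ⊆ {1, …, n-1}`, times `I ⊗ R_z(α₀)` on the last line, times a diagonal `v` on the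
first `n-1` lines (entrywise: the last bit is `b_n = j % 2`). -/
theorem diagonal_decomposes_via_xor_rotations (n : ℕ) (hn : 2 ≤ n)
    (u : Fin (2^n) → ℂ) (hu : ∀ j, ‖u j‖ = 1) :
    ∃ (Φ α₀ : ℝ) (αf : Finset ℕ → ℝ) (v : Fin (2^(n-1)) → ℂ),
      (∀ k, ‖v k‖ = 1) ∧
      ∀ j : Fin (2^n),
        u j = Complex.exp (Complex.I * (Φ : ℂ)) *
          (∏ S ∈ (Finset.Icc 1 (n-1)).powerset.erase ∅, dS n S (αf S) j) *
          Complex.exp (Complex.I * (α₀ : ℂ) * (-1)^(1 + (j : ℕ) % 2) / 2) *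
          v ⟨(j : ℕ) / 2, div2_lt (by omega) j⟩ := by
  refine ⟨0, alphaU n u ∅, alphaU n u, vU n u, fun k => Complex.norm_exp_ofReal_mul_I _, ?_⟩
  intro j
  have hpow : (2:ℕ)^n = 2^(n-1)*2 := by rw [← pow_succ]; congr 1; omega
  have hjlt := j.isLt
  have hb2 : (j:ℕ) % 2 < 2 := Nat.mod_lt _ (by norm_num)
  set kv := (j:ℕ)/2 with hkv
  have hj : (j:ℕ) = 2*kv + (j:ℕ)%2 := by omega
  have hkvlt : kv < 2^(n-1) := div2_lt (by omega) j
  set kF : Fin (2^(n-1)) := ⟨kv, div2_lt (by omega) j⟩ with hkF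
  -- the product of XOR rotations as a single exponential
  have hprod : (∏ S ∈ (Finset.Icc 1 (n-1)).powerset.erase ∅, dS n S (alphaU n u S) j)
      = Complex.exp (∑ S ∈ (Finset.Icc 1 (n-1)).powerset.erase ∅,
          Complex.I * (alphaU n u S : ℂ) * (-1:ℂ)^(1+(j:ℕ)%2) * ((sgn n S kv : ℝ):ℂ) / 2) := by
    rw [Complex.exp_sum]
    refine Finset.prod_congr rfl fun S hS => ?_
    exact dS_eq hn (Finset.mem_powerset.mp (Finset.mem_of_mem_erase hS)) _ kv _ hb2 j hj
  -- the α₀ factor is the S = ∅ term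
  have hempty : Complex.exp (Complex.I * ((alphaU n u ∅ : ℝ):ℂ) * (-1:ℂ)^(1+(j:ℕ)%2) / 2)
      = Complex.exp (Complex.I * ((alphaU n u ∅ : ℝ):ℂ) * (-1:ℂ)^(1+(j:ℕ)%2)
          * ((sgn n ∅ kv : ℝ):ℂ) / 2) := by
    have : sgn n ∅ kv = 1 := Finset.prod_empty
    rw [this]
    norm_num
  -- total sum over the full powerset
  have hw : (∑ S ∈ (Finset.Icc 1 (n-1)).powerset, alphaU n u S * sgn n S kv)
      = phiU n u kF := walsh_inv hn (phiU n u) kF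
  have hsum : (∑ S ∈ (Finset.Icc 1 (n-1)).powerset,
        Complex.I * (alphaU n u S : ℂ) * (-1:ℂ)^(1+(j:ℕ)%2) * ((sgn n S kv : ℝ):ℂ) / 2)
      = Complex.I * (-1:ℂ)^(1+(j:ℕ)%2) * ((phiU n u kF : ℝ):ℂ) / 2 := by
    have : ∀ S ∈ (Finset.Icc 1 (n-1)).powerset,
        Complex.I * (alphaU n u S : ℂ) * (-1:ℂ)^(1+(j:ℕ)%2) * ((sgn n S kv : ℝ):ℂ) / 2
        = (Complex.I * (-1:ℂ)^(1+(j:ℕ)%2) / 2) * ((alphaU n u S * sgn n S kv : ℝ):ℂ) := by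
      intro S _; push_cast; ring
    rw [Finset.sum_congr rfl this, ← Finset.mul_sum]
    rw [show (∑ S ∈ (Finset.Icc 1 (n-1)).powerset, ((alphaU n u S * sgn n S kv : ℝ):ℂ))
        = ((∑ S ∈ (Finset.Icc 1 (n-1)).powerset, alphaU n u S * sgn n S kv : ℝ):ℂ) by push_cast; rfl]
    rw [hw]
    ring
  -- express u j as an exponential
  have huj : u j = Complex.exp (((u j).arg : ℂ) * Complex.I) := by
    have h2 : ‖u j‖ = 1 := by exact hu j
    calc u j = ((‖u j‖ : ℝ) : ℂ) * Complex.exp (((u j).arg : ℂ) * Complex.I) :=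
          (Complex.norm_mul_exp_arg_mul_I (u j)).symm
      _ = Complex.exp (((u j).arg : ℂ) * Complex.I) := by rw [h2]; simp
  have hEA : (∑ S ∈ (Finset.Icc 1 (n-1)).powerset.erase ∅,
        Complex.I * (alphaU n u S : ℂ) * (-1:ℂ)^(1+(j:ℕ)%2) * ((sgn n S kv : ℝ):ℂ) / 2)
      + Complex.I * ((alphaU n u ∅ : ℝ):ℂ) * (-1:ℂ)^(1+(j:ℕ)%2) * ((sgn n ∅ kv : ℝ):ℂ) / 2
      = Complex.I * (-1:ℂ)^(1+(j:ℕ)%2) * ((phiU n u kF : ℝ):ℂ) / 2 := by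
    rw [Finset.sum_erase_add _ _ (by simp : ∅ ∈ (Finset.Icc 1 (n-1)).powerset)]
    exact hsum
  rw [hprod, hempty, huj]
  show _ = _ * _ * _ * vU n u kF
  unfold vU
  rw [← Complex.exp_add, ← Complex.exp_add, ← Complex.exp_add,
    add_assoc (Complex.I * ((0:ℝ):ℂ)), hEA]
  congr 1
  -- now pure arithmetic on the exponents, case split on the last bit
  have hkFv : (kF : ℕ) = kv := rfl
  rcases (by omega : (j:ℕ) % 2 = 0 ∨ (j:ℕ) % 2 = 1) with hb | hb
  · have hi : idx n (2*kv) = j := by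
      apply Fin.ext
      show 2*kv % 2^n = (j:ℕ)
      rw [Nat.mod_eq_of_lt (by omega)]; omega
    unfold phiU
    rw [hkFv, hi, hb]
    push_cast
    ring
  · have hi : idx n (2*kv+1) = j := by
      apply Fin.ext
      show (2*kv+1) % 2^n = (j:ℕ)
      rw [Nat.mod_eq_of_lt (by omega)]; omega
    unfold phiU
    rw [hkFv, hi, hb]
    push_cast
    ring
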